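/- Let r be a real random variable with P(r ≥ -1) = 1, P(r > 0) > 0, P(r < 0) > 0, and E[(ln(1+r))²] < ∞. Then the following two conditions are equivalent: (i) there exists f ∈ (0,1) with E[ln(1 + f r)] > 0; (ii) lim_{f→0+} E[r/(1 + f r)] > 0. Moreover, if E|r| < ∞ and E[r] > 0, then both conditions hold. -/

import Mathlib

open MeasureTheory Real Filter Topology Set

lemma fge_denom_pos {x f : ℝ} (hx : -1 ≤ x) (hf : 0 ≤ f) (hf1 : f < 1) :
    0 < 1 + f * x := by nlinarith

lemma fge_log_ge {x : ℝ} (hx : -1 < x) : x / (1 + x) ≤ Real.log (1 + x) := by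
  have h : (0:ℝ) < 1 + x := by linarith
  have h2 := Real.log_le_sub_one_of_pos (inv_pos.2 h)
  rw [Real.log_inv] at h2
  have hxx : x / (1 + x) = 1 - (1 + x)⁻¹ := by field_simp; ring
  rw [hxx]; linarith

lemma fge_chord {x f f' : ℝ} (hx : -1 ≤ x) (hf : 0 ≤ f) (hff' : f ≤ f') (hf' : f' < 1) :
    Real.log (1 + f' * x) - Real.log (1 + f * x) ≤ (f' - f) * (x / (1 + f * x)) := by
  have ha : 0 < 1 + f * x := fge_denom_pos hx hf (lt_of_le_of_lt hff' hf')
  have hb : 0 < 1 + f' * x := fge_denom_pos hx (hf.trans hff') hf'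
  have h2 := Real.log_le_sub_one_of_pos (div_pos hb ha)
  rw [Real.log_div hb.ne' ha.ne'] at h2
  have : (1 + f' * x) / (1 + f * x) - 1 = (f' - f) * (x / (1 + f * x)) := by
    rw [div_sub_one ha.ne', mul_div_assoc']; ring
  linarith

lemma fge_anti {x f f' : ℝ} (hx : -1 ≤ x) (hf : 0 < f) (hff' : f ≤ f') (hf' : f' < 1) :
    x / (1 + f' * x) ≤ x / (1 + f * x) := by
  have ha : 0 < 1 + f * x := fge_denom_pos hx hf.le (lt_of_le_of_lt hff' hf')
  have hb : 0 < 1 + f' * x := fge_denom_pos hx (hf.le.trans hff') hf'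
  rw [div_le_div_iff₀ hb ha]
  nlinarith [sq_nonneg x, mul_le_mul_of_nonneg_right hff' (sq_nonneg x)]

lemma fge_bound_div {x f : ℝ} (hx : -1 ≤ x) (hf : 0 < f) (hf1 : f < 1) :
    |x / (1 + f * x)| ≤ 1 / f + 1 / (1 - f) := by
  have ha : 0 < 1 + f * x := fge_denom_pos hx hf.le hf1
  have h1f : 0 < 1 - f := by linarith
  rcases le_or_gt 0 x with hx0 | hx0
  · rw [abs_of_nonneg (div_nonneg hx0 ha.le)]
    have h : x / (1 + f * x) ≤ 1 / f := by
      rw [div_le_div_iff₀ ha hf]; nlinarith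
    have : 0 ≤ 1 / (1 - f) := by positivity
    linarith
  · rw [abs_of_nonpos (div_nonpos_of_nonpos_of_nonneg hx0.le ha.le)]
    have h : -x / (1 + f * x) ≤ 1 / (1 - f) := by
      rw [div_le_div_iff₀ ha h1f]; nlinarith
    have : 0 ≤ 1 / f := by positivity
    rw [neg_div] at h
    linarith

lemma fge_bound_log {x f : ℝ} (hx : -1 ≤ x) (hf : 0 ≤ f) (hf1 : f < 1) :
    |Real.log (1 + f * x)| ≤ |Real.log (1 + x)| + (- Real.log (1 - f)) := by
  have h1f : 0 < 1 - f := by linarith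
  have hneg : Real.log (1 - f) ≤ 0 := Real.log_nonpos h1f.le (by linarith)
  rcases le_or_gt 0 x with hx0 | hx0
  · have h1 : (1:ℝ) ≤ 1 + f * x := by nlinarith
    have h2 : 1 + f * x ≤ 1 + x := by nlinarith
    rw [abs_of_nonneg (Real.log_nonneg h1)]
    have h3 : Real.log (1 + f * x) ≤ Real.log (1 + x) :=
      Real.log_le_log (by linarith) h2
    have h4 : Real.log (1 + x) ≤ |Real.log (1 + x)| := le_abs_self _
    linarith
  · have h1 : 1 - f ≤ 1 + f * x := by nlinarith
    have h2 : 1 + f * x ≤ 1 := by nlinarith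
    have h3 : Real.log (1 + f * x) ≤ 0 :=
      Real.log_nonpos (by linarith) h2
    have h4 : Real.log (1 - f) ≤ Real.log (1 + f * x) :=
      Real.log_le_log h1f h1
    rw [abs_of_nonpos h3]
    have h5 : (0:ℝ) ≤ |Real.log (1 + x)| := abs_nonneg _
    linarith

lemma fge_bound_log_div {x f : ℝ} (hx : -1 ≤ x) (hf : 0 < f) (hf1 : f ≤ 1/2) :
    |Real.log (1 + f * x)| ≤ f * (|x| + 2) := by
  have ha : 0 < 1 + f * x := fge_denom_pos hx hf.le (by linarith)
  rcases le_or_gt 0 x with hx0 | hx0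
  · have h1 : (1:ℝ) ≤ 1 + f * x := by nlinarith
    rw [abs_of_nonneg (Real.log_nonneg h1), abs_of_nonneg hx0]
    have h2 : Real.log (1 + f * x) ≤ (1 + f * x) - 1 := Real.log_le_sub_one_of_pos ha
    nlinarith
  · have h2 : 1 + f * x ≤ 1 := by nlinarith
    have h3 : Real.log (1 + f * x) ≤ 0 := Real.log_nonpos ha.le h2
    rw [abs_of_nonpos h3]
    have h4 := Real.log_le_sub_one_of_pos (inv_pos.2 ha)
    rw [Real.log_inv] at h4
    have h5 : (1 + f * x)⁻¹ - 1 = (- (f * x)) / (1 + f * x) := by field_simp; ring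
    have h6 : (-(f * x)) / (1 + f * x) ≤ 2 * f := by
      rw [div_le_iff₀ ha]; nlinarith
    have h7 : (0:ℝ) ≤ f * |x| := by positivity
    rw [h5] at h4
    linarith

theorem favorable_game_equivalence
    {Ω : Type*} [MeasurableSpace Ω] (P : Measure Ω) [IsProbabilityMeasure P]
    (r : Ω → ℝ) (hmeas : Measurable r)
    (h1 : ∀ᵐ ω ∂P, -1 ≤ r ω)
    (hpos : 0 < P {ω | 0 < r ω})
    (hneg : 0 < P {ω | r ω < 0})
    (hsq : Integrable (fun ω => (Real.log (1 + r ω)) ^ 2) P) :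
    ((∃ f ∈ Set.Ioo (0 : ℝ) 1, 0 < ∫ ω, Real.log (1 + f * r ω) ∂P)
      ↔ (∃ l : EReal, 0 < l ∧
          Tendsto (fun f : ℝ => ((∫ ω, r ω / (1 + f * r ω) ∂P : ℝ) : EReal))
            (𝓝[>] (0 : ℝ)) (𝓝 l)))
    ∧ (Integrable r P → 0 < ∫ ω, r ω ∂P →
        (∃ f ∈ Set.Ioo (0 : ℝ) 1, 0 < ∫ ω, Real.log (1 + f * r ω) ∂P)
        ∧ (∃ l : EReal, 0 < l ∧
            Tendsto (fun f : ℝ => ((∫ ω, r ω / (1 + f * r ω) ∂P : ℝ) : EReal))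
              (𝓝[>] (0 : ℝ)) (𝓝 l))) := by
  have hml : ∀ f : ℝ, Measurable fun ω => Real.log (1 + f * r ω) :=
    fun f => (measurable_const.add (measurable_const.mul hmeas)).log
  have hmd : ∀ f : ℝ, Measurable fun ω => r ω / (1 + f * r ω) :=
    fun f => hmeas.div (measurable_const.add (measurable_const.mul hmeas))
  have hintlog : ∀ f : ℝ, 0 ≤ f → f < 1 →
      Integrable (fun ω => Real.log (1 + f * r ω)) P := by
    intro f hf0 hf1
    refine ((hsq.add (integrable_const 1)).add
      (integrable_const (-Real.log (1 - f)))).mono' (hml f).aestronglyMeasurable ?_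
    filter_upwards [h1] with ω hω
    have hb := fge_bound_log hω hf0 hf1
    have h2 : |Real.log (1 + r ω)| ≤ (Real.log (1 + r ω)) ^ 2 + 1 := by
      nlinarith [sq_abs (Real.log (1 + r ω)), sq_nonneg (|Real.log (1 + r ω)| - 1)]
    simp only [Pi.add_apply, Real.norm_eq_abs]; linarith
  have hintdiv : ∀ f : ℝ, 0 < f → f < 1 →
      Integrable (fun ω => r ω / (1 + f * r ω)) P := by
    intro f hf0 hf1
    refine (integrable_const (1/f + 1/(1-f))).mono' (hmd f).aestronglyMeasurable ?_
    filter_upwards [h1] with ω hω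
    rw [Real.norm_eq_abs]
    exact fge_bound_div hω hf0 hf1
  have key_lower : ∀ f : ℝ, 0 < f → f < 1 → 0 < ∫ ω, r ω / (1 + f * r ω) ∂P →
      0 < ∫ ω, Real.log (1 + f * r ω) ∂P := by
    intro f hf0 hf1 hφ
    have hmono : ∫ ω, f * (r ω / (1 + f * r ω)) ∂P ≤ ∫ ω, Real.log (1 + f * r ω) ∂P := by
      refine integral_mono_ae ((hintdiv f hf0 hf1).const_mul f) (hintlog f hf0.le hf1) ?_
      filter_upwards [h1] with ω hω
      have hgt : -1 < f * r ω := by nlinarith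
      calc f * (r ω / (1 + f * r ω)) = (f * r ω) / (1 + f * r ω) := by ring
        _ ≤ Real.log (1 + f * r ω) := fge_log_ge hgt
    rw [integral_const_mul] at hmono
    nlinarith
  have hanti : AntitoneOn
      (fun f : ℝ => ((∫ ω, r ω / (1 + f * r ω) ∂P : ℝ) : EReal)) (Ioo (0:ℝ) (1/2)) := by
    intro a ha b hb hab
    have h : ∫ ω, r ω / (1 + b * r ω) ∂P ≤ ∫ ω, r ω / (1 + a * r ω) ∂P := by
      refine integral_mono_ae (hintdiv b hb.1 (by linarith [hb.2]))
        (hintdiv a ha.1 (by linarith [ha.2])) ?_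
      filter_upwards [h1] with ω hω
      exact fge_anti hω ha.1 hab (by linarith [hb.2])
    exact EReal.coe_le_coe_iff.2 h
  have key_tendsto : Tendsto
      (fun f : ℝ => ((∫ ω, r ω / (1 + f * r ω) ∂P : ℝ) : EReal)) (𝓝[>] (0:ℝ))
      (𝓝 (sSup ((fun f : ℝ => ((∫ ω, r ω / (1 + f * r ω) ∂P : ℝ) : EReal)) ''
        Ioo (0:ℝ) (1/2)))) :=
    hanti.tendsto_nhdsWithin_Ioo_right ⟨1/4, by norm_num⟩ (OrderTop.bddAbove _)
  have fwd : (∃ f ∈ Set.Ioo (0 : ℝ) 1, 0 < ∫ ω, Real.log (1 + f * r ω) ∂P) →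
      (∃ l : EReal, 0 < l ∧
        Tendsto (fun f : ℝ => ((∫ ω, r ω / (1 + f * r ω) ∂P : ℝ) : EReal))
          (𝓝[>] (0 : ℝ)) (𝓝 l)) := by
    rintro ⟨f₀, hf₀, hgpos⟩
    refine ⟨_, ?_, key_tendsto⟩
    have hg0 : Tendsto (fun f : ℝ => ∫ ω, Real.log (1 + f * r ω) ∂P) (𝓝[>] (0:ℝ)) (𝓝 0) := by
      have h := tendsto_integral_filter_of_dominated_convergence (μ := P)
        (F := fun (f : ℝ) ω => Real.log (1 + f * r ω)) (f := fun _ => (0:ℝ))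
        (l := 𝓝[>] (0:ℝ))
        (fun ω => (Real.log (1 + r ω))^2 + 1 + Real.log 2)
        (Eventually.of_forall fun f => (hml f).aestronglyMeasurable)
        ?_ ((hsq.add (integrable_const 1)).add (integrable_const _)) ?_
      · simpa using h
      · filter_upwards [Ioo_mem_nhdsGT (by norm_num : (0:ℝ) < 1/2)] with f hf
        filter_upwards [h1] with ω hω
        have hb := fge_bound_log hω hf.1.le (by linarith [hf.2])
        have h2 : |Real.log (1 + r ω)| ≤ (Real.log (1 + r ω))^2 + 1 := by
          nlinarith [sq_abs (Real.log (1 + r ω)), sq_nonneg (|Real.log (1 + r ω)| - 1)]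
        have h3 : -Real.log (1 - f) ≤ Real.log 2 := by
          have h4 : Real.log (1/2 : ℝ) ≤ Real.log (1 - f) :=
            Real.log_le_log (by norm_num) (by linarith [hf.2])
          have h5 : Real.log (1/2 : ℝ) = -Real.log 2 := by
            rw [show (1:ℝ)/2 = 2⁻¹ by norm_num, Real.log_inv]
          linarith
        simp only [Pi.add_apply, Real.norm_eq_abs]; linarith
      · filter_upwards [h1] with ω hω
        have hc : ContinuousAt (fun f : ℝ => Real.log (1 + f * r ω)) 0 := by
          apply ContinuousAt.log
          · fun_prop
          · simp
        have h0 : Real.log (1 + 0 * r ω) = 0 := by simp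
        simpa [h0] using hc.tendsto.mono_left nhdsWithin_le_nhds
    have hev : ∀ᶠ f in 𝓝[>] (0:ℝ),
        (∫ ω, Real.log (1 + f * r ω) ∂P) < ∫ ω, Real.log (1 + f₀ * r ω) ∂P :=
      hg0.eventually_lt_const hgpos
    obtain ⟨f, hflt, hfmem⟩ := (hev.and (Ioo_mem_nhdsGT
      (lt_min hf₀.1 (by norm_num : (0:ℝ) < 1/2)))).exists
    have hf0 : 0 < f := hfmem.1
    have hffl : f < f₀ := lt_of_lt_of_le hfmem.2 (min_le_left _ _)
    have hfhalf : f < 1/2 := lt_of_lt_of_le hfmem.2 (min_le_right _ _)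
    have hae : ∀ᵐ ω ∂P, Real.log (1 + f₀ * r ω) - Real.log (1 + f * r ω)
        ≤ (f₀ - f) * (r ω / (1 + f * r ω)) := by
      filter_upwards [h1] with ω hω
      exact fge_chord hω hf0.le hffl.le hf₀.2
    have hch : ∫ ω, (Real.log (1 + f₀ * r ω) - Real.log (1 + f * r ω)) ∂P
        ≤ ∫ ω, (f₀ - f) * (r ω / (1 + f * r ω)) ∂P := integral_mono_ae
      ((hintlog f₀ hf₀.1.le hf₀.2).sub (hintlog f hf0.le (by linarith)))
      ((hintdiv f hf0 (by linarith)).const_mul (f₀ - f)) hae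
    rw [integral_sub (hintlog f₀ hf₀.1.le hf₀.2) (hintlog f hf0.le (by linarith)),
      integral_const_mul] at hch
    have hφpos : 0 < ∫ ω, r ω / (1 + f * r ω) ∂P := by nlinarith
    calc (0:EReal) < ((∫ ω, r ω / (1 + f * r ω) ∂P : ℝ) : EReal) := by exact_mod_cast hφpos
      _ ≤ sSup ((fun f : ℝ => ((∫ ω, r ω / (1 + f * r ω) ∂P : ℝ) : EReal)) ''
          Ioo (0:ℝ) (1/2)) := le_sSup ⟨f, ⟨hf0, hfhalf⟩, rfl⟩
  have bwd : (∃ l : EReal, 0 < l ∧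
        Tendsto (fun f : ℝ => ((∫ ω, r ω / (1 + f * r ω) ∂P : ℝ) : EReal))
          (𝓝[>] (0 : ℝ)) (𝓝 l)) →
      (∃ f ∈ Set.Ioo (0 : ℝ) 1, 0 < ∫ ω, Real.log (1 + f * r ω) ∂P) := by
    rintro ⟨l, hl, ht⟩
    have hev : ∀ᶠ f in 𝓝[>] (0:ℝ),
        (0:EReal) < ((∫ ω, r ω / (1 + f * r ω) ∂P : ℝ) : EReal) :=
      ht.eventually_const_lt hl
    obtain ⟨f, hfφ, hf⟩ := (hev.and (Ioo_mem_nhdsGT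
      (by norm_num : (0:ℝ) < 1))).exists
    exact ⟨f, hf, key_lower f hf.1 hf.2 (by exact_mod_cast hfφ)⟩
  refine ⟨⟨fwd, bwd⟩, ?_⟩
  intro hint hEr
  have hi : ∃ f ∈ Set.Ioo (0 : ℝ) 1, 0 < ∫ ω, Real.log (1 + f * r ω) ∂P := by
    have hsl : Tendsto (fun f : ℝ => ∫ ω, Real.log (1 + f * r ω) / f ∂P) (𝓝[>] (0:ℝ))
        (𝓝 (∫ ω, r ω ∂P)) := by
      refine tendsto_integral_filter_of_dominated_convergence (fun ω => |r ω| + 2)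
        (Eventually.of_forall fun f => ((hml f).div_const f).aestronglyMeasurable)
        ?_ (hint.abs.add (integrable_const 2)) ?_
      · filter_upwards [Ioo_mem_nhdsGT (by norm_num : (0:ℝ) < 1/2)] with f hf
        filter_upwards [h1] with ω hω
        rw [Real.norm_eq_abs, abs_div, abs_of_pos hf.1, div_le_iff₀ hf.1]
        calc |Real.log (1 + f * r ω)| ≤ f * (|r ω| + 2) :=
            fge_bound_log_div hω hf.1 hf.2.le
          _ = (|r ω| + 2) * f := mul_comm _ _
      · filter_upwards [h1] with ω hω
        have hd : HasDerivAt (fun f : ℝ => Real.log (1 + f * r ω)) (r ω) 0 := by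
          have inner : HasDerivAt (fun f : ℝ => 1 + f * r ω) (r ω) 0 := by
            simpa using ((hasDerivAt_id (0:ℝ)).mul_const (r ω)).const_add 1
          have houter := Real.hasDerivAt_log (x := 1 + (0:ℝ) * r ω) (by norm_num)
          have hcomp := houter.comp 0 inner
          rw [show (1 + (0:ℝ) * r ω)⁻¹ * r ω = r ω by simp] at hcomp
          exact hcomp
        have hslp := hasDerivAt_iff_tendsto_slope.1 hd
        have h2 : Tendsto (slope (fun f : ℝ => Real.log (1 + f * r ω)) 0)
            (𝓝[>] (0:ℝ)) (𝓝 (r ω)) :=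
          hslp.mono_left (nhdsWithin_mono _ (fun x hx => ne_of_gt hx))
        apply h2.congr
        intro f
        rw [slope_def_field]
        simp
    obtain ⟨f, hfpos', hf⟩ := ((hsl.eventually_const_lt hEr).and
      (Ioo_mem_nhdsGT (by norm_num : (0:ℝ) < 1/2))).exists
    refine ⟨f, ⟨hf.1, by linarith [hf.2]⟩, ?_⟩
    rw [show (fun ω => Real.log (1 + f * r ω) / f) = fun ω => Real.log (1 + f * r ω) / f from rfl,
      integral_div] at hfpos'
    have hmul := mul_pos hfpos' hf.1
    rwa [div_mul_cancel₀ _ (ne_of_gt hf.1)] at hmul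
  exact ⟨hi, fwd hi⟩
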